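/- Let y : [a, b] → ℝ be nonnegative and differentiable, λ > 0, g : [a,b] → ℝ nonnegative continuous, and suppose y'(t) + λ y(t) ≤ g(t) on [a, b]. Then for every ξ ∈ [a, b] with ξ > a, y(ξ) ≤ (1/(ξ - a)) e^{λ(b - a)} ∫_{a}^{b} e^{λ(σ - b)} y(σ) dσ + e^{λ(b-a)} ∫_{a}^{b} e^{λ(σ - b)} g(σ) dσ. -/

import Mathlib

open Real Set intervalIntegral

theorem stmt_9 (a b lam : ℝ) (hab : a ≤ b) (hlam : 0 < lam)
    (y y' g : ℝ → ℝ)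
    (hy_nonneg : ∀ t ∈ Icc a b, 0 ≤ y t)
    (hy : ∀ t ∈ Icc a b, HasDerivAt y (y' t) t)
    (hg_nonneg : ∀ t ∈ Icc a b, 0 ≤ g t)
    (hg : ContinuousOn g (Icc a b))
    (hineq : ∀ t ∈ Icc a b, y' t + lam * y t ≤ g t) :
    ∀ ξ ∈ Icc a b, a < ξ →
      y ξ ≤ (1 / (ξ - a)) * Real.exp (lam * (b - a)) *
              (∫ σ in a..b, Real.exp (lam * (σ - b)) * y σ) +
            Real.exp (lam * (b - a)) * ∫ σ in a..b, Real.exp (lam * (σ - b)) * g σ := by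
  intro ξ hξ haξ
  obtain ⟨hξa, hξb⟩ := hξ
  set h : ℝ → ℝ := fun σ => Real.exp (lam * (σ - b)) * g σ with hh_def
  set F : ℝ → ℝ := fun t => Real.exp (lam * (t - b)) * y t with hF_def
  have hcont_exp : Continuous fun t : ℝ => Real.exp (lam * (t - b)) := by continuity
  have hy_cont : ContinuousOn y (Icc a b) := fun t ht =>
    ((hy t ht).continuousAt).continuousWithinAt
  have hF_cont : ContinuousOn F (Icc a b) := hcont_exp.continuousOn.mul hy_cont
  have hh_cont : ContinuousOn h (Icc a b) := hcont_exp.continuousOn.mul hg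
  have hF_nonneg : ∀ t ∈ Icc a b, 0 ≤ F t := fun t ht =>
    mul_nonneg (Real.exp_nonneg _) (hy_nonneg t ht)
  have hh_nonneg : ∀ t ∈ Icc a b, 0 ≤ h t := fun t ht =>
    mul_nonneg (Real.exp_nonneg _) (hg_nonneg t ht)
  have huicc : uIcc a b = Icc a b := uIcc_of_le hab
  have hh_int : IntervalIntegrable h MeasureTheory.volume a b :=
    ContinuousOn.intervalIntegrable (by rw [huicc]; exact hh_cont)
  have hF_int : IntervalIntegrable F MeasureTheory.volume a b :=
    ContinuousOn.intervalIntegrable (by rw [huicc]; exact hF_cont)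
  -- derivative of F
  have hF' : ∀ t ∈ Icc a b,
      HasDerivAt F (Real.exp (lam * (t - b)) * (y' t + lam * y t)) t := by
    intro t ht
    have hlin : HasDerivAt (fun t : ℝ => lam * (t - b)) lam t := by
      simpa using ((hasDerivAt_id t).sub_const b).const_mul lam
    have he : HasDerivAt (fun t : ℝ => Real.exp (lam * (t - b)))
        (Real.exp (lam * (t - b)) * lam) t := hlin.exp
    have : HasDerivAt (fun t => Real.exp (lam * (t - b)) * y t)
        (Real.exp (lam * (t - b)) * lam * y t + Real.exp (lam * (t - b)) * y' t) t :=
      he.mul (hy t ht)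
    convert this using 1
    ring
  -- primitive of h
  set I : ℝ → ℝ := fun t => ∫ σ in a..t, h σ with hI_def
  have hI_cont : ContinuousOn I (Icc a b) := by
    have := intervalIntegral.continuousOn_primitive_interval
      (f := h) (μ := MeasureTheory.volume) (a := a) (b := b)
      (by rw [huicc]; exact hh_cont.integrableOn_Icc)
    simpa [huicc] using this
  have hI' : ∀ t ∈ Ioo a b, HasDerivAt I (h t) t := by
    intro t ht
    have hmem : Icc a b ∈ nhds t := Icc_mem_nhds ht.1 ht.2
    have hsub : uIcc a t ⊆ uIcc a b := by
      rw [huicc, uIcc_of_le ht.1.le]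
      exact Icc_subset_Icc le_rfl ht.2.le
    have hint : IntervalIntegrable h MeasureTheory.volume a t := hh_int.mono_set hsub
    simpa using intervalIntegral.integral_hasDerivAt_right hint
      ⟨Icc a b, hmem, hh_cont.aestronglyMeasurable measurableSet_Icc⟩
      (hh_cont.continuousAt hmem)
  -- Φ is antitone
  set Φ : ℝ → ℝ := fun t => F t - I t with hΦ_def
  have hΦ_anti : AntitoneOn Φ (Icc a b) := by
    apply antitoneOn_of_deriv_nonpos (convex_Icc a b)
      (hF_cont.sub hI_cont)
    · intro t ht
      rw [interior_Icc] at ht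
      exact ((hF' t (Ioo_subset_Icc_self ht)).sub (hI' t ht)).differentiableAt.differentiableWithinAt
    · intro t ht
      rw [interior_Icc] at ht
      have ht' := Ioo_subset_Icc_self ht
      rw [((hF' t ht').sub (hI' t ht)).deriv]
      have := hineq t ht'
      have hgle : Real.exp (lam * (t - b)) * (y' t + lam * y t) ≤ h t :=
        mul_le_mul_of_nonneg_left this (Real.exp_nonneg _)
      linarith
  -- key pointwise bound
  set G : ℝ := ∫ σ in a..b, h σ with hG_def
  have hG_nonneg : 0 ≤ G :=
    intervalIntegral.integral_nonneg hab fun t ht => hh_nonneg t ht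
  have key : ∀ s ∈ Icc a ξ, F ξ ≤ F s + G := by
    intro s hs
    have hs' : s ∈ Icc a b := ⟨hs.1, hs.2.trans hξb⟩
    have hΦ := hΦ_anti hs' ⟨hξa, hξb⟩ hs.2
    have hIs : 0 ≤ I s :=
      intervalIntegral.integral_nonneg hs.1 fun t ht =>
        hh_nonneg t ⟨ht.1, ht.2.trans hs'.2⟩
    have hIξ : I ξ ≤ G := by
      apply intervalIntegral.integral_mono_interval le_rfl hξa hξb _ hh_int
      filter_upwards [MeasureTheory.ae_restrict_mem measurableSet_Ioc] with t ht
      exact hh_nonneg t ⟨ht.1.le, ht.2⟩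
    have : F ξ - I ξ ≤ F s - I s := hΦ
    linarith
  -- integrate in s over [a, ξ]
  have hsubξ : uIcc a ξ ⊆ uIcc a b := by
    rw [huicc, uIcc_of_le hξa]
    exact Icc_subset_Icc le_rfl hξb
  have hF_int_aξ : IntervalIntegrable F MeasureTheory.volume a ξ := hF_int.mono_set hsubξ
  have havg : (ξ - a) * F ξ ≤ (∫ s in a..ξ, F s) + (ξ - a) * G := by
    have hmono : (∫ _ in a..ξ, F ξ) ≤ ∫ s in a..ξ, (F s + G) := by
      apply intervalIntegral.integral_mono_on hξa intervalIntegrable_const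
        (hF_int_aξ.add intervalIntegrable_const)
      intro s hs
      exact key s hs
    rw [intervalIntegral.integral_const, intervalIntegral.integral_add hF_int_aξ
      intervalIntegrable_const, intervalIntegral.integral_const] at hmono
    simpa [smul_eq_mul, mul_comm] using hmono
  have hFint_mono : (∫ s in a..ξ, F s) ≤ ∫ s in a..b, F s := by
    apply intervalIntegral.integral_mono_interval le_rfl hξa hξb _ hF_int
    filter_upwards [MeasureTheory.ae_restrict_mem measurableSet_Ioc] with t ht
    exact hF_nonneg t ⟨ht.1.le, ht.2⟩
  have hξa' : 0 < ξ - a := by linarith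
  have hFξ : F ξ ≤ (1 / (ξ - a)) * (∫ s in a..b, F s) + G := by
    rw [div_mul_eq_mul_div, one_mul, ← sub_le_iff_le_add, le_div_iff₀ hξa']
    nlinarith [havg, hFint_mono]
  -- conclude
  have hyξ : y ξ = Real.exp (lam * (b - ξ)) * F ξ := by
    simp only [hF_def]
    rw [← mul_assoc, ← Real.exp_add]
    have : lam * (b - ξ) + lam * (ξ - b) = 0 := by ring
    rw [this, Real.exp_zero, one_mul]
  have hexp_le : Real.exp (lam * (b - ξ)) ≤ Real.exp (lam * (b - a)) := by
    apply Real.exp_le_exp.2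
    nlinarith
  have hFξ_nonneg : 0 ≤ F ξ := hF_nonneg ξ ⟨hξa, hξb⟩
  have h1 : y ξ ≤ Real.exp (lam * (b - a)) * F ξ := by
    rw [hyξ]
    exact mul_le_mul_of_nonneg_right hexp_le hFξ_nonneg
  have h2 : Real.exp (lam * (b - a)) * F ξ ≤
      Real.exp (lam * (b - a)) * ((1 / (ξ - a)) * (∫ s in a..b, F s) + G) :=
    mul_le_mul_of_nonneg_left hFξ (Real.exp_nonneg _)
  calc y ξ ≤ Real.exp (lam * (b - a)) * ((1 / (ξ - a)) * (∫ s in a..b, F s) + G) :=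
        h1.trans h2
  _ = (1 / (ξ - a)) * Real.exp (lam * (b - a)) * (∫ s in a..b, F s) +
      Real.exp (lam * (b - a)) * G := by ring
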